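/- For every natural number r and infinite cardinal μ, the partition relation (ℶ_r(μ))⁺ → (μ⁺)^{r+1}_μ holds: every coloring of the (r+1)-element subsets of a set of cardinality (ℶ_r(μ))⁺ into at most μ colors admits a homogeneous subset of cardinality μ⁺. -/

import Mathlib

open Cardinal

/-- The iterated beth function starting at `μ`: `ℶ_0(μ) = μ`, `ℶ_{r+1}(μ) = 2 ^ ℶ_r(μ)`. -/
def iterBeth (μ : Cardinal.{u}) : ℕ → Cardinal.{u}
  | 0 => μ
  | n + 1 => 2 ^ iterBeth μ n

namespace ErdosRadoAux

open Cardinal Set Order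
open scoped Classical

universe u

variable {α β : Type u}

theorem le_iterBeth (μ : Cardinal.{u}) (r : ℕ) : μ ≤ iterBeth μ r := by
  induction r with
  | zero => exact le_rfl
  | succ r ih => exact ih.trans (cantor _).le

/-- `v` has the same `f`-pattern as `u` over `B`, for `(r+2)`-subsets. -/
def Realizes (r : ℕ) (f : {s : Finset α // s.card = r + 2} → β) (B : Set α) (u v : α) : Prop :=
  ∀ (s : Finset α), ↑s ⊆ B → s.card = r + 1 →
    ∀ (h1 : (insert v s).card = r + 2) (h2 : (insert u s).card = r + 2),
      f ⟨insert v s, h1⟩ = f ⟨insert u s, h2⟩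

variable {r : ℕ} {f : {s : Finset α // s.card = r + 2} → β}

noncomputable def patt [Nonempty β] (r : ℕ) (f : {s : Finset α // s.card = r + 2} → β)
    (B : Set α) (u : α) : {s : Finset α // ↑s ⊆ B ∧ s.card = r + 1} → β := fun s =>
  if h : (insert u s.1).card = r + 2 then f ⟨insert u s.1, h⟩ else Classical.arbitrary β

theorem realizes_of_patt_eq [Nonempty β] {B : Set α} {u v : α}
    (h : patt r f B u = patt r f B v) : Realizes r f B u v := by
  intro s hs hcard h1 h2
  have := congrFun h ⟨s, hs, hcard⟩
  unfold patt at this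
  rw [dif_pos h2, dif_pos h1] at this
  exact this.symm

theorem mk_finset_le {γ : Type u} {ν : Cardinal.{u}} (hν : ℵ₀ ≤ ν) (h : #γ ≤ ν) :
    #(Finset γ) ≤ ν := by
  rcases finite_or_infinite γ with hf | hf
  · haveI := Fintype.ofFinite γ
    exact le_trans (lt_aleph0_of_finite (Finset γ)).le hν
  · rwa [mk_finset_of_infinite]

theorem mk_patt_dom_le {B : Set α} {ν : Cardinal.{u}} (hν : ℵ₀ ≤ ν) (hB : #B ≤ ν) :
    #{s : Finset α // ↑s ⊆ B ∧ s.card = r + 1} ≤ ν := by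
  classical
  have : Function.Injective
      (fun s : {s : Finset α // ↑s ⊆ B ∧ s.card = r + 1} =>
        s.1.preimage (Subtype.val : B → α) Subtype.val_injective.injOn) := by
    rintro ⟨s, hs, hs'⟩ ⟨t, ht, ht'⟩ h
    have hs2 : Finset.image Subtype.val (s.preimage (Subtype.val : B → α)
        Subtype.val_injective.injOn) = s := by
      rw [Finset.image_preimage]
      exact Finset.filter_true_of_mem fun x hx => by
        simpa [Subtype.range_coe] using hs hx
    have ht2 : Finset.image Subtype.val (t.preimage (Subtype.val : B → α)
        Subtype.val_injective.injOn) = t := by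
      rw [Finset.image_preimage]
      exact Finset.filter_true_of_mem fun x hx => by
        simpa [Subtype.range_coe] using ht hx
    apply Subtype.ext
    show s = t
    rw [← hs2, ← ht2]
    exact congrArg _ h
  refine le_trans (mk_le_of_injective this) (mk_finset_le hν hB)

/-- Existence of a small set of witnesses realizing all patterns over `B`. -/
theorem exists_witness_set {μ ν : Cardinal.{u}} (hμ : ℵ₀ ≤ μ) (hν : ℵ₀ ≤ ν)
    [Nonempty β] (hβ : #β ≤ μ) (B : Set α) (hB : #B ≤ ν) :
    ∃ W : Set α, #W ≤ μ ^ ν ∧ ∀ u ∉ B, ∃ v ∈ W, v ∉ B ∧ Realizes r f B u v := by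
  classical
  set φ : {u : α // u ∉ B} → ({s : Finset α // ↑s ⊆ B ∧ s.card = r + 1} → β) :=
    fun u => patt r f B u.1 with hφ
  refine ⟨Set.range (fun p : ↥(Set.range φ) => (p.2.choose : {u : α // u ∉ B}).1), ?_, ?_⟩
  · refine le_trans mk_range_le ?_
    refine le_trans (mk_subtype_le _) ?_
    rw [← power_def]
    exact le_trans (power_le_power_right hβ)
      (power_le_power_left ((aleph0_pos.trans_le hμ).ne') (mk_patt_dom_le hν hB))
  · intro u hu
    set p : ↥(Set.range φ) := ⟨φ ⟨u, hu⟩, ⟨⟨u, hu⟩, rfl⟩⟩ with hp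
    refine ⟨(p.2.choose : {u : α // u ∉ B}).1, ⟨p, rfl⟩, (p.2.choose).2, ?_⟩
    have := p.2.choose_spec
    exact realizes_of_patt_eq this.symm

local instance (priority := 2000) instWFR {ι : Type u} [LinearOrder ι] [WellFoundedLT ι] :
    WellFoundedRelation ι := ⟨(· < ·), IsWellFounded.wf⟩

variable {ι : Type u} [LinearOrder ι] [WellFoundedLT ι]

/-- Transfinite chain closing off under the witness-set operation `W`. -/
noncomputable def chainC [WellFoundedLT ι] (ν : Cardinal.{u}) (W : Set α → Set α) (i : ι) :
    Set α :=
  (⋃ j : Iio i, chainC ν W j.1) ∪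
    ⋃ B : {B : Set α // (B ⊆ ⋃ j : Iio i, chainC ν W j.1) ∧ #B ≤ ν}, W B.1
termination_by i
decreasing_by all_goals exact j.2

theorem W_subset_chainC {ν : Cardinal.{u}} {W : Set α → Set α} {i : ι} {B : Set α}
    (hB : B ⊆ ⋃ j : Iio i, chainC ν W j.1) (hBν : #B ≤ ν) :
    W B ⊆ chainC ν W i := by
  intro x hx
  rw [chainC]
  exact Or.inr (mem_iUnion.2 ⟨⟨B, hB, hBν⟩, hx⟩)

theorem mk_chainC_le {ν : Cardinal.{u}} {W : Set α → Set α} (hν : ℵ₀ ≤ ν)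
    (hW : ∀ B, #(W B) ≤ 2 ^ ν) (hι : ∀ i : ι, #(Iio i) ≤ ν) (i : ι) :
    #(chainC ν W i) ≤ 2 ^ ν := by
  induction i using WellFoundedLT.induction with
  | ind i ih =>
    have h2 : ℵ₀ ≤ 2 ^ ν := hν.trans (cantor ν).le
    have hU : #(⋃ j : Iio i, chainC ν W j.1) ≤ 2 ^ ν := by
      refine le_trans mk_iUnion_le_sum_mk ?_
      refine le_trans (sum_le_sum _ _ fun j => ih j.1 j.2) ?_
      rw [sum_const']
      calc #(Iio i) * 2 ^ ν ≤ 2 ^ ν * 2 ^ ν :=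
            mul_le_mul' ((hι i).trans (ν.cantor.le)) le_rfl
        _ = 2 ^ ν := mul_eq_self h2
    rw [chainC]
    refine le_trans (mk_union_le _ _) ?_
    have hB : #{B : Set α // (B ⊆ ⋃ j : Iio i, chainC ν W j.1) ∧ #B ≤ ν} ≤ 2 ^ ν := by
      refine le_trans (mk_bounded_subset_le _ ν) ?_
      have hm : max #(⋃ j : Iio i, chainC ν W j.1) ℵ₀ ≤ 2 ^ ν := max_le hU h2
      calc max #(⋃ j : Iio i, chainC ν W j.1) ℵ₀ ^ ν ≤ (2 ^ ν) ^ ν :=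
            power_le_power_right hm
        _ = 2 ^ (ν * ν) := (power_mul).symm
        _ = 2 ^ ν := by rw [mul_eq_self hν]
    have hUW : #(⋃ B : {B : Set α // (B ⊆ ⋃ j : Iio i, chainC ν W j.1) ∧ #B ≤ ν}, W B.1)
        ≤ 2 ^ ν := by
      refine le_trans mk_iUnion_le_sum_mk ?_
      refine le_trans (sum_le_sum _ _ fun B => hW B.1) ?_
      rw [sum_const']
      calc _ ≤ 2 ^ ν * 2 ^ ν := mul_le_mul' hB le_rfl
        _ = 2 ^ ν := mul_eq_self h2
    calc _ ≤ 2 ^ ν + 2 ^ ν := add_le_add hU hUW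
      _ = 2 ^ ν := add_eq_self h2

/-- The sequence of distinct elements of `A` realizing the pattern of `u` over all
previous elements. -/
noncomputable def seqx [WellFoundedLT ι] {β : Type u} [Nonempty α] (ν : Cardinal.{u}) (r : ℕ)
    (f : {s : Finset α // s.card = r + 2} → β) (A : Set α) (u : α) (i : ι) : α :=
  if h : ∃ v, v ∈ A ∧ v ∉ Set.range (fun j : Iio i => seqx ν r f A u j.1) ∧
      Realizes r f (Set.range (fun j : Iio i => seqx ν r f A u j.1)) u v
  then h.choose else Classical.arbitrary α
termination_by i
decreasing_by all_goals exact j.2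

theorem seqx_spec [Nonempty α] {ν : Cardinal.{u}} {A : Set α} {u : α}
    (hclosed : ∀ B ⊆ A, #B ≤ ν → ∀ u ∉ B, ∃ v ∈ A, v ∉ B ∧ Realizes r f B u v)
    (hu : u ∉ A) (hι : ∀ i : ι, #(Iio i) ≤ ν) (i : ι) :
    seqx ν r f A u i ∈ A ∧ seqx ν r f A u i ∉ Set.range (fun j : Iio i => seqx ν r f A u j.1) ∧
      Realizes r f (Set.range (fun j : Iio i => seqx ν r f A u j.1)) u
        (seqx ν r f A u i) := by
  induction i using WellFoundedLT.induction with
  | ind i ih =>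
    have hsub : Set.range (fun j : Iio i => seqx ν r f A u j.1) ⊆ A := by
      rintro x ⟨j, rfl⟩; exact (ih j.1 j.2).1
    have hcard : #(Set.range (fun j : Iio i => seqx ν r f A u j.1)) ≤ ν :=
      le_trans mk_range_le (hι i)
    have hunB : u ∉ Set.range (fun j : Iio i => seqx ν r f A u j.1) := fun h => hu (hsub h)
    have hex : ∃ v, v ∈ A ∧ v ∉ Set.range (fun j : Iio i => seqx ν r f A u j.1) ∧
        Realizes r f (Set.range (fun j : Iio i => seqx ν r f A u j.1)) u v := by
      obtain ⟨v, hv1, hv2, hv3⟩ := hclosed _ hsub hcard u hunB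
      exact ⟨v, hv1, hv2, hv3⟩
    have heq : seqx ν r f A u i = hex.choose := by rw [seqx, dif_pos hex]
    rw [heq]
    exact hex.choose_spec

end ErdosRadoAux

namespace ErdosRadoAux

open Cardinal Set Order
open scoped Classical

theorem erdos_rado_aux (r : ℕ) (μ : Cardinal.{u}) (hμ : ℵ₀ ≤ μ) :
    ∀ (α β : Type u), #α = Order.succ (iterBeth μ r) → #β ≤ μ →
      ∀ f : {s : Finset α // s.card = r + 1} → β,
        ∃ H : Set α, #H = Order.succ μ ∧ ∀ s t : {s : Finset α // s.card = r + 1},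
          ↑s.val ⊆ H → ↑t.val ⊆ H → f s = f t := by
  induction r with
  | zero =>
    intro α β hα hβ f
    set g : α → β := fun a => f ⟨{a}, Finset.card_singleton a⟩ with hg
    have hcof : #β < (Order.succ μ).ord.cof := by
      rw [(isRegular_succ hμ).cof_eq]; exact hβ.trans_lt (Order.lt_succ μ)
    obtain ⟨b, hb⟩ := Cardinal.infinite_pigeonhole_card g (Order.succ μ)
      (by rw [hα]; simp [iterBeth]) (hμ.trans (Order.le_succ μ)) hcof
    obtain ⟨H, hH1, hH2⟩ := le_mk_iff_exists_subset.1 hb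
    refine ⟨H, hH2, ?_⟩
    intro s t hs ht
    obtain ⟨a, ha⟩ := Finset.card_eq_one.1 s.2
    obtain ⟨c, hc⟩ := Finset.card_eq_one.1 t.2
    have h1 : f s = g a := by rw [hg]; congr 1; exact Subtype.ext ha
    have h2 : f t = g c := by rw [hg]; congr 1; exact Subtype.ext hc
    have ha' : a ∈ H := hs (by rw [ha]; exact Finset.mem_singleton_self a)
    have hc' : c ∈ H := ht (by rw [hc]; exact Finset.mem_singleton_self c)
    have hga : g a = b := by have := hH1 ha'; simpa using this
    have hgc : g c = b := by have := hH1 hc'; simpa using this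
    rw [h1, h2, hga, hgc]
  | succ r IH =>
    intro α β hα hβ f
    set ν := iterBeth μ r with hν'
    have hμν : μ ≤ ν := le_iterBeth μ r
    have hν : ℵ₀ ≤ ν := hμ.trans hμν
    have h2ν : ℵ₀ ≤ 2 ^ ν := hν.trans (cantor ν).le
    have hα2 : #α = Order.succ (2 ^ ν) := by rw [hα]; simp [iterBeth, hν']
    haveI : Infinite α := by
      rw [Cardinal.infinite_iff, hα2]; exact h2ν.trans (Order.le_succ _)
    haveI : Nonempty α := inferInstance
    haveI : Nonempty β := by
      refine ⟨f ⟨(Finset.range (r + 2)).map (Infinite.natEmbedding α), ?_⟩⟩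
      rw [Finset.card_map, Finset.card_range]
    -- witness-set function
    have hWex : ∀ B : Set α, ∃ W : Set α, #W ≤ 2 ^ ν ∧
        (#B ≤ ν → ∀ u ∉ B, ∃ v ∈ W, v ∉ B ∧ Realizes r f B u v) := by
      intro B
      by_cases hB : #B ≤ ν
      · obtain ⟨W, hW1, hW2⟩ := exists_witness_set hμ hν hβ B hB
        refine ⟨W, hW1.trans ?_, fun _ => hW2⟩
        calc μ ^ ν ≤ (2 ^ ν) ^ ν :=
              power_le_power_right (hμν.trans (cantor ν).le)
          _ = 2 ^ (ν * ν) := (power_mul).symm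
          _ = 2 ^ ν := by rw [mul_eq_self hν]
      · exact ⟨∅, by simp, fun h => absurd h hB⟩
    choose W hW1 hW2 using hWex
    have hιIio : ∀ i : (Order.succ ν).ord.ToType, #(Set.Iio i) ≤ ν :=
      fun i => Order.lt_succ_iff.1 (mk_Iio_ord_toType i)
    set A := ⋃ i : (Order.succ ν).ord.ToType, chainC ν W i with hA'
    have hAcard : #A ≤ 2 ^ ν := by
      refine le_trans mk_iUnion_le_sum_mk ?_
      refine le_trans (sum_le_sum _ _ fun i => mk_chainC_le hν hW1 hιIio i) ?_
      rw [sum_const']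
      have hι2 : #(Order.succ ν).ord.ToType ≤ 2 ^ ν := by
        rw [Cardinal.mk_toType, card_ord]
        exact Order.succ_le_of_lt (cantor ν)
      calc #(Order.succ ν).ord.ToType * 2 ^ ν ≤ 2 ^ ν * 2 ^ ν := mul_le_mul' hι2 le_rfl
        _ = 2 ^ ν := mul_eq_self h2ν
    have hclosed : ∀ B ⊆ A, #B ≤ ν → ∀ u ∉ B, ∃ v ∈ A, v ∉ B ∧ Realizes r f B u v := by
      intro B hBA hBν u hu
      have hbound : ∃ a : (Order.succ ν).ord.ToType, B ⊆ ⋃ j : Set.Iio a, chainC ν W j.1 := by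
        choose gg hgg using fun b : B => Set.mem_iUnion.1 (hBA b.2)
        haveI : IsWellOrder (Order.succ ν).ord.ToType (· < ·) := isWellOrder_lt
        have hbd : Set.Bounded (· < ·) (Set.range gg) := by
          have hlt : #(Set.range gg) < Order.cof (Order.succ ν).ord.ToType := by
            rw [Ordinal.cof_toType, (isRegular_succ hν).cof_eq]
            exact (mk_range_le.trans hBν).trans_lt (Order.lt_succ ν)
          have hnc : ¬ IsCofinal (Set.range gg) := fun hc => absurd hlt (not_lt_of_ge (Order.cof_le hc))
          simp only [IsCofinal, not_forall, not_exists, not_and, not_le] at hnc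
          obtain ⟨a, ha⟩ := hnc
          exact ⟨a, ha⟩
        obtain ⟨a, ha⟩ := hbd
        exact ⟨a, fun b hb => Set.mem_iUnion.2
          ⟨⟨gg ⟨b, hb⟩, ha _ (Set.mem_range_self _)⟩, hgg ⟨b, hb⟩⟩⟩
      obtain ⟨a, ha⟩ := hbound
      obtain ⟨v, hv1, hv2, hv3⟩ := hW2 B hBν u hu
      exact ⟨v, Set.mem_iUnion.2 ⟨a, W_subset_chainC ha hBν hv1⟩, hv2, hv3⟩
    have hAne : ∃ u, u ∉ A := by
      by_contra h
      push_neg at h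
      have hAuniv : A = Set.univ := Set.eq_univ_of_forall h
      rw [hAuniv, mk_univ, hα2] at hAcard
      exact absurd hAcard (not_le.2 (Order.lt_succ (2 ^ ν)))
    obtain ⟨u, hu⟩ := hAne
    have hspec := fun i : (Order.succ ν).ord.ToType => seqx_spec hclosed hu hιIio i
    have hinj : Function.Injective (seqx ν r f A u : (Order.succ ν).ord.ToType → α) := by
      intro i j hij
      by_contra hne
      rcases lt_or_gt_of_ne hne with h | h
      · exact (hspec j).2.1 ⟨⟨i, h⟩, hij⟩
      · exact (hspec i).2.1 ⟨⟨j, h⟩, hij.symm⟩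
    set X := Set.range (seqx ν r f A u : (Order.succ ν).ord.ToType → α) with hX'
    have hXA : X ⊆ A := by rintro x ⟨i, rfl⟩; exact (hspec i).1
    have hXcard : #X = Order.succ ν := by
      rw [hX', mk_range_eq _ hinj, Cardinal.mk_toType, card_ord]
    have huX : u ∉ X := fun h => hu (hXA h)
    set emb : ↥X ↪ α := Function.Embedding.subtype _ with hemb
    have hgdef : ∀ s' : {t : Finset ↥X // t.card = r + 1},
        (insert u (s'.1.map emb)).card = r + 2 := by
      intro s'
      rw [Finset.card_insert_of_notMem, Finset.card_map, s'.2]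
      intro hmem
      obtain ⟨x, _, hx2⟩ := Finset.mem_map.1 hmem
      exact huX (hx2 ▸ x.2)
    set g : {t : Finset ↥X // t.card = r + 1} → β :=
      fun s' => f ⟨insert u (s'.1.map emb), hgdef s'⟩ with hg
    obtain ⟨H', hH'1, hH'2⟩ := IH ↥X β (by rw [hXcard]) hβ g
    refine ⟨Subtype.val '' H', by rw [mk_image_eq Subtype.val_injective, hH'1], ?_⟩
    have key : ∀ s : {s : Finset α // s.card = r + 1 + 1}, ↑s.1 ⊆ Subtype.val '' H' →
        ∃ s' : {t : Finset ↥X // t.card = r + 1}, ↑s'.1 ⊆ H' ∧ f s = g s' := by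
      intro s hs
      have hH'X : Subtype.val '' H' ⊆ X := by rintro x ⟨b, _, rfl⟩; exact b.2
      have hsX : ↑s.1 ⊆ X := hs.trans hH'X
      set I : Finset ((Order.succ ν).ord.ToType) := s.1.preimage (seqx ν r f A u) hinj.injOn with hI
      have hIimage : I.image (seqx ν r f A u) = s.1 := by
        rw [hI, Finset.image_preimage]
        exact Finset.filter_true_of_mem fun x hx => hsX hx
      have hInonempty : I.Nonempty := by
        rw [Finset.nonempty_iff_ne_empty]
        intro h
        rw [h, Finset.image_empty] at hIimage
        have := s.2
        rw [← hIimage] at this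
        simp at this
      set i' := I.max' hInonempty with hi'
      set a' := seqx ν r f A u i' with ha'
      have ha's : a' ∈ s.1 := Finset.mem_preimage.1 (I.max'_mem hInonempty)
      set sm := s.1.erase a' with hsm
      have hsmcard : sm.card = r + 1 := by
        rw [hsm, Finset.card_erase_of_mem ha's, s.2]
        rfl
      have hsmprev : ↑sm ⊆ Set.range (fun j : Set.Iio i' => seqx ν r f A u j.1) := by
        intro x hx
        have hxs : x ∈ s.1 := Finset.mem_of_mem_erase hx
        obtain ⟨j, rfl⟩ := hsX hxs
        have hjI : j ∈ I := Finset.mem_preimage.2 hxs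
        have hji : j ≠ i' := by
          intro h
          exact Finset.ne_of_mem_erase hx (by rw [h, ← ha'])
        exact ⟨⟨j, lt_of_le_of_ne (I.le_max' j hjI) hji⟩, rfl⟩
      have husm : u ∉ sm := fun h => hu (hXA (hsX (Finset.mem_of_mem_erase h)))
      have h2 : (insert u sm).card = r + 2 := by
        rw [Finset.card_insert_of_notMem husm, hsmcard]
      have h1 : (insert a' sm).card = r + 2 := by
        rw [hsm, Finset.insert_erase ha's, s.2]
      have hreal := (hspec i').2.2 sm hsmprev hsmcard h1 h2
      set s' : Finset ↥X := sm.preimage Subtype.val Subtype.val_injective.injOn with hs'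
      have hs'map : s'.map emb = sm := by
        rw [hs', hemb, Finset.map_eq_image]
        show Finset.image Subtype.val _ = sm
        rw [Finset.image_preimage]
        refine Finset.filter_true_of_mem fun x hx => ?_
        simpa [Subtype.range_coe] using hsX (Finset.mem_of_mem_erase hx)
      have hs'card : s'.card = r + 1 := by rw [← hsmcard, ← hs'map, Finset.card_map]
      refine ⟨⟨s', hs'card⟩, ?_, ?_⟩
      · intro x hx
        have hx' : x ∈ s' := hx
        have hxsm : (x : α) ∈ sm := Finset.mem_preimage.1 hx'
        obtain ⟨b, hb, hbx⟩ := hs (Finset.mem_of_mem_erase hxsm)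
        rwa [show x = b from Subtype.ext hbx.symm]
      · have e1 : f s = f ⟨insert a' sm, h1⟩ := by
          congr 1
          exact Subtype.ext (Finset.insert_erase ha's).symm
        have e2 : g ⟨s', hs'card⟩ = f ⟨insert u sm, h2⟩ := by
          have hmapeq : (⟨insert u (Finset.map emb s'), hgdef ⟨s', hs'card⟩⟩ :
              {s : Finset α // s.card = r + 1 + 1}) = ⟨insert u sm, h2⟩ :=
            Subtype.ext (by show insert u (s'.map emb) = insert u sm; rw [hs'map])
          show f ⟨insert u (Finset.map emb s'), hgdef ⟨s', hs'card⟩⟩ = f ⟨insert u sm, h2⟩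
          rw [hmapeq]
        rw [e1, hreal, e2]
    intro s t hs ht
    obtain ⟨s', hs'H, hfs⟩ := key s hs
    obtain ⟨t', ht'H, hft⟩ := key t ht
    rw [hfs, hft]
    exact hH'2 s' t' hs'H ht'H

end ErdosRadoAux

/-- The Erdős–Rado theorem: `(ℶ_r(μ))⁺ → (μ⁺)^{r+1}_μ`.  Every coloring of the
`(r+1)`-element subsets of a set of cardinality `(ℶ_r(μ))⁺` into at most `μ` colors
admits a homogeneous subset of cardinality `μ⁺`. -/
theorem erdos_rado (r : ℕ) (μ : Cardinal.{u}) (hμ : ℵ₀ ≤ μ)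
    {α : Type u} (hα : #α = Order.succ (iterBeth μ r))
    {β : Type u} (hβ : #β ≤ μ)
    (f : {s : Finset α // s.card = r + 1} → β) :
    ∃ H : Set α, #H = Order.succ μ ∧
      ∀ s t : {s : Finset α // s.card = r + 1},
        ↑s.val ⊆ H → ↑t.val ⊆ H → f s = f t :=
  ErdosRadoAux.erdos_rado_aux r μ hμ α β hα hβ f
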